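/- For the Gaussian conjugate model, KL(π_n^c, π_m^f) / W₂²(π_m^f, π_n^c) ≥ m/(2σ²), with equality if and only if m = n + z. -/

import Mathlib

open Real

/-- in the Gaussian conjugate model, with
`KL = (1/2)[m/(n+z) + (m/σ²)(μ_n - x̄_m)² - 1 + log((n+z)/m)]` and
`W₂² = (μ_n - x̄_m)² + (σ/√m - σ/√(n+z))²` (assumed positive, i.e. `x̄_m ≠ μ_n` or
`m ≠ n+z`), one has `KL / W₂² ≥ m/(2σ²)`, with equality iff `m = n + z`. -/
theorem stmt_15 (n m z σ μn xbarm : ℝ) (hn : 0 < n) (hm : 0 < m) (hz : 0 < z)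
    (hσ : 0 < σ) (hpos : xbarm ≠ μn ∨ m ≠ n + z)
    (KL W : ℝ)
    (hKL : KL = (1 / 2) * (m / (n + z) + (m / σ ^ 2) * (μn - xbarm) ^ 2 - 1
      + Real.log ((n + z) / m)))
    (hW : W = (μn - xbarm) ^ 2 + (σ / Real.sqrt m - σ / Real.sqrt (n + z)) ^ 2) :
    m / (2 * σ ^ 2) ≤ KL / W ∧ (KL / W = m / (2 * σ ^ 2) ↔ m = n + z) := by
  have hnz : 0 < n + z := by linarith
  set sm := Real.sqrt m with hsm
  set sq := Real.sqrt (n + z) with hsq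
  have hsm0 : 0 < sm := Real.sqrt_pos.mpr hm
  have hsq0 : 0 < sq := Real.sqrt_pos.mpr hnz
  have hsm2 : sm ^ 2 = m := Real.sq_sqrt hm.le
  have hsq2 : sq ^ 2 = n + z := Real.sq_sqrt hnz.le
  -- log rewrite
  have hlog : Real.log ((n + z) / m) = 2 * Real.log (sq / sm) := by
    rw [← hsm2, ← hsq2, ← div_pow, Real.log_pow]
    push_cast; ring
  set t := sq / sm with ht
  have ht0 : 0 < t := div_pos hsq0 hsm0
  -- key inequality: log t ≥ 1 - 1/t
  have hkey : 1 - 1/t ≤ Real.log t := by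
    have := Real.log_le_sub_one_of_pos (x := 1/t) (by positivity)
    rw [Real.log_div one_ne_zero (ne_of_gt ht0), Real.log_one] at this
    linarith
  have hE : 0 ≤ Real.log ((n + z) / m) + 2 * (sm / sq) - 2 := by
    rw [hlog]
    have : sm / sq = 1 / t := by rw [ht, one_div_div]
    rw [this]; linarith
  -- decomposition KL = c * W + extra/2
  have hdecomp : KL = m / (2 * σ ^ 2) * W +
      (Real.log ((n + z) / m) + 2 * (sm / sq) - 2) / 2 := by
    rw [hKL, hW]
    have h1 : m = sm ^ 2 := hsm2.symm
    have h2 : n + z = sq ^ 2 := hsq2.symm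
    rw [h1, h2]
    field_simp
    ring
  -- W > 0
  have hW0 : 0 < W := by
    rw [hW]
    rcases hpos with h | h
    · have h1 : 0 < (μn - xbarm) ^ 2 := by
        have : μn - xbarm ≠ 0 := sub_ne_zero.mpr (Ne.symm h)
        positivity
      nlinarith [sq_nonneg (σ / sm - σ / sq)]
    · have hne : sm ≠ sq := by
        intro hh
        apply h
        rw [← hsm2, ← hsq2, hh]
      have h1 : σ / sm - σ / sq ≠ 0 := by
        intro hh
        have h2 : σ / sm = σ / sq := by linarith
        rw [div_eq_div_iff (ne_of_gt hsm0) (ne_of_gt hsq0)] at h2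
        exact hne (mul_left_cancel₀ (ne_of_gt hσ) h2).symm
      have : 0 < (σ / sm - σ / sq) ^ 2 := by positivity
      nlinarith [sq_nonneg (μn - xbarm)]
  have hle : m / (2 * σ ^ 2) * W ≤ KL := by rw [hdecomp]; linarith
  constructor
  · rw [le_div_iff₀ hW0]; linarith [hle]
  · rw [div_eq_iff (ne_of_gt hW0)]
    constructor
    · intro heq
      by_contra hne
      -- strict key inequality
      have htne : t ≠ 1 := by
        intro hh
        apply hne
        have : sq = sm := by
          rw [ht, div_eq_one_iff_eq (ne_of_gt hsm0)] at hh
          linarith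
        rw [← hsm2, ← hsq2, this]
      have hstrict : 1 - 1/t < Real.log t := by
        have h1t : (1:ℝ)/t ≠ 1 := by
          intro hh
          apply htne
          field_simp at hh
          linarith
        have := Real.log_lt_sub_one_of_pos (x := 1/t) (by positivity) h1t
        rw [Real.log_div one_ne_zero (ne_of_gt ht0), Real.log_one] at this
        linarith
      have hE' : 0 < Real.log ((n + z) / m) + 2 * (sm / sq) - 2 := by
        rw [hlog]
        have : sm / sq = 1 / t := by rw [ht, one_div_div]
        rw [this]; linarith
      rw [hdecomp] at heq
      linarith
    · intro heq
      have hss : sm = sq := by rw [hsm, hsq, heq]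
      have h1 : Real.log ((n + z) / m) = 0 := by
        rw [← heq, div_self (ne_of_gt hm), Real.log_one]
      have h2 : sm / sq = 1 := by rw [hss, div_self (ne_of_gt hsq0)]
      rw [hdecomp, h1, h2]
      ring
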